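/- Let T be a finite tree with |V(T)| ≥ 2 and maximum degree at most Δ. Then there exists a set A ⊂ V(T) such that both A and A^c induce connected subgraphs of T, |A| ≥ |V(T)|/(4Δ), and |A^c| ≥ |V(T)|/2. -/

import Mathlib

open Finset

noncomputable section

/-- A finite Markov chain together with its (positive) stationary distribution. -/
structure MarkovChain (V : Type) [Fintype V] [DecidableEq V] where
  P : V → V → ℝ
  P_nonneg : ∀ u v, 0 ≤ P u v
  P_rowsum : ∀ u, ∑ v, P u v = 1
  pi : V → ℝ
  pi_pos : ∀ v, 0 < pi v
  pi_sum : ∑ v, pi v = 1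
  pi_stat : ∀ v, ∑ u, pi u * P u v = pi v

/-- A set of vertices `A` is connected (in `G`) if any two of its vertices are joined
by a walk all of whose vertices lie in `A` (vacuously true for `∅`). -/
def ConnIn {V : Type} (G : SimpleGraph V) (A : Set V) : Prop :=
  ∀ u ∈ A, ∀ v ∈ A, ∃ p : G.Walk u v, ∀ x ∈ p.support, x ∈ A

/-- Every vertex of `G` has degree at most `Δ`. -/
def DegLE {V : Type} (G : SimpleGraph V) (Δ : ℕ) : Prop :=
  ∀ v, {u | G.Adj v u}.ncard ≤ Δ

/-- `𝒞` is a correspondence between `G` and `H` of stretch at most `r`. -/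
def CorrespondenceStretchLE {V W : Type} (G : SimpleGraph V) (H : SimpleGraph W)
    (r : ℝ) (𝒞 : Set (V × W)) : Prop :=
  (∀ v, ∃ w, (v, w) ∈ 𝒞) ∧ (∀ w, ∃ v, (v, w) ∈ 𝒞) ∧
    ∀ p ∈ 𝒞, ∀ q ∈ 𝒞,
      (max (G.dist p.1 q.1) (H.dist p.2 q.2) : ℝ) + 1 ≤
        r * ((min (G.dist p.1 q.1) (H.dist p.2 q.2) : ℝ) + 1)

/-- `G` and `H` are `r`-roughly isometric. -/
def RoughIsom {V W : Type} (G : SimpleGraph V) (H : SimpleGraph W) (r : ℝ) : Prop :=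
  ∃ 𝒞 : Set (V × W), CorrespondenceStretchLE G H r 𝒞

namespace MarkovChain

variable {V : Type} [Fintype V] [DecidableEq V] (M : MarkovChain V)

/-- `n`-step transition probabilities. -/
def stepDist : ℕ → V → V → ℝ
  | 0, u, v => if u = v then 1 else 0
  | n + 1, u, v => ∑ w, stepDist n u w * M.P w v

def Irreducible : Prop := ∀ u v, ∃ n, 0 < M.stepDist n u v

def Lazy : Prop := ∀ v, M.P v v = 1 / 2

def Reversible : Prop := ∀ u v, M.pi u * M.P u v = M.pi v * M.P v u

/-- The graph associated to the chain: `u ∼ v` iff `u ≠ v` and `p uv > 0` or `p vu > 0`. -/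
def graph : SimpleGraph V where
  Adj u v := u ≠ v ∧ (0 < M.P u v ∨ 0 < M.P v u)
  symm := ⟨fun u v h => ⟨h.1.symm, h.2.symm⟩⟩
  loopless := ⟨fun v h => h.1 rfl⟩

/-- The chain is `ε`-uniform. -/
def Uniform (ε : ℝ) : Prop :=
  ∀ u v x y, M.graph.Adj u v → M.graph.Adj x y →
    ε * (M.pi x * M.P x y) ≤ M.pi u * M.P u v ∧
      M.pi u * M.P u v ≤ (M.pi x * M.P x y) / ε

/-- `Q A B = P_π(X₀ ∈ A, X₁ ∈ B)`. -/
def Q (A B : Finset V) : ℝ := ∑ u ∈ A, ∑ v ∈ B, M.pi u * M.P u v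

/-- `π(A)`. -/
def piSet (A : Finset V) : ℝ := ∑ v ∈ A, M.pi v

/-- `Φ(A) = Q(A,Aᶜ)/(π(A)π(Aᶜ))`. -/
def Phi (A : Finset V) : ℝ := M.Q A Aᶜ / (M.piSet A * M.piSet Aᶜ)

/-- A subset of the state space is connected if it induces a connected subgraph. -/
def Conn (A : Finset V) : Prop := ConnIn M.graph (A : Set V)

/-- A `θ`-bottleneck sequence `S 1 ⊆ ⋯ ⊆ S l`. -/
def IsBottleneckSeq (θ : ℝ) (l : ℕ) (S : ℕ → Finset V) : Prop :=
  1 ≤ l ∧ (S 1).Nonempty ∧ S l ≠ Finset.univ ∧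
    (∀ j, 1 ≤ j → j < l → S j ⊆ S (j + 1)) ∧
    (∀ j, 1 ≤ j → j ≤ l → M.Conn (S j) ∧ M.Conn (S j)ᶜ) ∧
    (∀ j, 1 ≤ j → j < l → θ * M.Q (S j)ᶜ (S j) ≤ M.Q (S (j + 1) \ S j) (S j))

/-- The maximum, over `θ`-bottleneck sequences, of `∑ j, 1/Φ(S j)`. -/
def maxBotSum (θ : ℝ) : ℝ :=
  sSup {x | ∃ (l : ℕ) (S : ℕ → Finset V),
    M.IsBottleneckSeq θ l S ∧ x = ∑ j ∈ Finset.Icc 1 l, 1 / M.Phi (S j)}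

/-- The maximum, over `1`-bottleneck sequences, of `∑ j, |S j| * |(S j)ᶜ|`. -/
def maxBotCardProd : ℝ :=
  sSup {x | ∃ (l : ℕ) (S : ℕ → Finset V),
    M.IsBottleneckSeq 1 l S ∧
      x = ∑ j ∈ Finset.Icc 1 l, ((S j).card : ℝ) * ((S j)ᶜ.card : ℝ)}

/-- Total variation distance between the time-`n` distribution of the chain started
at `v`, and the stationary distribution. -/
def tvDist (n : ℕ) (v : V) : ℝ :=
  ⨆ A : Finset V, |∑ u ∈ A, (M.stepDist n v u - M.pi u)|

/-- The total variation mixing time. -/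
def tMix : ℕ := sInf {n : ℕ | ∀ v, M.tvDist n v ≤ 1 / 4}

/-- Exit frequencies `x v = E_s[#{k < τ : X_k = v}]` of a stopping rule `τ` from `s`
to `π`.  (By a theorem of Lovász and Winkler, a vector arises this way from some
stopping rule from `s` to `π` iff it is nonnegative and satisfies the balance
equations below; moreover `E_s[τ] = ∑ v, x v`.) -/
def IsExitMeasure (s : V) (x : V → ℝ) : Prop :=
  (∀ v, 0 ≤ x v) ∧
    ∀ v, (if v = s then (1 : ℝ) else 0) + ∑ u, x u * M.P u v = M.pi v + x v

/-- `inf E_s[τ]` over all stopping rules `τ` from `s` to `π`. -/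
def stopTimeFrom (s : V) : ℝ :=
  sInf {E | ∃ x : V → ℝ, M.IsExitMeasure s x ∧ E = ∑ v, x v}

/-- `t_stop = max_s inf E_s[τ]`. -/
def tStop : ℝ := ⨆ s : V, M.stopTimeFrom s

/-- `avoidProb A n v = P_v(H(A) > n)`. -/
def avoidProb (A : Finset V) : ℕ → V → ℝ
  | 0, v => if v ∈ A then 0 else 1
  | n + 1, v => if v ∈ A then 0 else ∑ w, M.P v w * avoidProb A n w

/-- `E_v[H(A)]`, the expected hitting time of `A` from `v`. -/
def expHit (v : V) (A : Finset V) : ℝ := ∑' n : ℕ, M.avoidProb A n v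

/-- `E_v[H⁺(A)]`, where `H⁺(A) = min {n ≥ 1 : X_n ∈ A}`. -/
def expHitPlus (v : V) (A : Finset V) : ℝ :=
  1 + ∑ w, M.P v w * M.expHit w A

/-- `t_hit(δ) = max {E_v[H(A)] : v ∈ V, π(A) ≥ δ}`. -/
def tHit (δ : ℝ) : ℝ :=
  sSup {x | ∃ (v : V) (A : Finset V), δ ≤ M.piSet A ∧ x = M.expHit v A}

/-- `hitProbLE n v u = P_v(H(u) ≤ n)`. -/
def hitProbLE : ℕ → V → V → ℝ
  | 0, v, u => if v = u then 1 else 0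
  | n + 1, v, u => if v = u then 1 else ∑ w, M.P v w * hitProbLE n w u

/-- `v` is `α`-near to `u`: `π(v) P_v(H(u) ≤ 1/α) ≥ α π(u)`. -/
def Near (α : ℝ) (v u : V) : Prop :=
  α * M.pi u ≤ M.pi v * M.hitProbLE ⌊1 / α⌋₊ v u

/-- `A` is `α`-near to `B`: every vertex of `A` is `α`-near to some vertex of `B`. -/
def NearSet (α : ℝ) (A : Set V) (B : Finset V) : Prop :=
  ∀ v ∈ A, ∃ u ∈ B, M.Near α v u

/-- The inner boundary `∂ⁱ A`. -/
def innerBoundary (A : Finset V) : Set V :=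
  {v | v ∈ A ∧ ∃ u, u ∉ A ∧ 0 < M.P u v}

/-- `B` is a `β`-adjustment of `A`. -/
def Adjustment (β : ℝ) (A B : Finset V) : Prop :=
  ∀ S : Finset V, S ⊆ Bᶜ → M.Conn (A ∪ S) →
    β * M.Q (B ∪ S)ᶜ (B ∪ S) ≤ M.Q (B ∪ S)ᶜ (A ∪ S)

/-- A `γ`-valid move for Crawler, from `(C, D)` to `(C', D)`. -/
def CrawlerMove (γ : ℝ) (C D C' : Finset V) : Prop :=
  C ⊆ C' ∧ C' \ C ⊆ Dᶜ ∧ M.Conn C' ∧ M.Q (D ∪ C')ᶜ C ≤ γ * M.Q Dᶜ C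

/-- An `(s,α,β)`-valid move for Dasher, from `(C, D)` to `(C, D')`. -/
def DasherMove (s : V) (α β : ℝ) (C D D' : Finset V) : Prop :=
  D ∪ C ⊆ D' ∧ M.Conn D'ᶜ ∧ M.NearSet α (M.innerBoundary D') C ∧
    M.Adjustment β C D' ∧ (s ∈ D' → (∃ u ∈ C, M.Near α s u) ∧ D' = Finset.univ)

/-- `((C i, D i), 0 ≤ i ≤ k)` is an `(s,α,β,γ)`-valid sequence. -/
def ValidSeq (s : V) (α β γ : ℝ) (k : ℕ) (C D : ℕ → Finset V) : Prop :=
  C 0 = ∅ ∧ D 0 = ∅ ∧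
    ∀ i, i < k → M.CrawlerMove γ (C i) (D i) (C (i + 1)) ∧
      M.DasherMove s α β (C (i + 1)) (D i) (D (i + 1))

/-- `((C i, D i), 0 ≤ i ≤ l + 1)` is an `(s,α,β,γ)`-valid game. -/
def ValidGame (s : V) (α β γ : ℝ) (l : ℕ) (C D : ℕ → Finset V) : Prop :=
  M.ValidSeq s α β γ (l + 1) C D ∧ D (l + 1) = Finset.univ

end MarkovChain

namespace TreeCutAux

open SimpleGraph


variable {V : Type} [Fintype V] [DecidableEq V] {T : SimpleGraph V}

/-- On a geodesic walk, distances split additively at any support vertex. -/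
lemma split_dist (hc : T.Connected) {x y z : V} {p : T.Walk x y}
    (hp : p.length = T.dist x y) (hz : z ∈ p.support) :
    T.dist x z + T.dist z y = T.dist x y := by
  have h1 : T.dist x z ≤ (p.takeUntil z hz).length := dist_le _
  have h2 : T.dist z y ≤ (p.dropUntil z hz).length := dist_le _
  have h3 : (p.takeUntil z hz).length + (p.dropUntil z hz).length = p.length := by
    have := congrArg Walk.length (p.take_spec hz)
    rwa [Walk.length_append] at this
  have h4 := hc.dist_triangle (u := x) (v := z) (w := y)
  omega

lemma exists_geodesic (hc : T.Connected) (x y : V) :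
    ∃ p : T.Walk x y, p.IsPath ∧ p.length = T.dist x y := by
  obtain ⟨p, hp⟩ := hc.exists_walk_length_eq_dist x y
  exact ⟨p.bypass, p.bypass_isPath,
    le_antisymm (hp ▸ p.length_bypass_le) (dist_le _)⟩

lemma dist_pos_of_ne (hc : T.Connected) {x y : V} (h : x ≠ y) : 0 < T.dist x y := by
  have := ((hc.preconnected x y).dist_eq_zero_iff).not.mpr h
  omega

lemma concat_isPath (hc : T.Connected) {x u v : V} {p : T.Walk x u}
    (hp : p.IsPath) (hlen : p.length = T.dist x u) (h : T.Adj u v)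
    (hd : p.length < T.dist x v) : (p.concat h).IsPath := by
  have hv : v ∉ p.support := by
    intro hmem
    have := split_dist hc hlen hmem
    have h1 : T.dist x v ≤ (p.takeUntil v hmem).length := dist_le _
    have h2 := p.length_takeUntil_le hmem
    omega
  rw [← Walk.isPath_reverse_iff, Walk.reverse_concat]
  refine hp.reverse.cons ?_
  rwa [Walk.support_reverse, List.mem_reverse]

/-- F1: distances to the two endpoints of an edge of a tree are never equal. -/
lemma dist_ne_of_adj (hT : T.IsTree) (x : V) {u v : V} (huv : T.Adj u v) :
    T.dist x u ≠ T.dist x v := by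
  have hc := hT.isConnected
  intro h
  obtain ⟨p, hp, hpl⟩ := exists_geodesic hc x u
  obtain ⟨q, hq, hql⟩ := exists_geodesic hc x v
  have hd1 : T.dist u v = 1 := dist_eq_one_iff_adj.mpr huv
  have hv : v ∉ p.support := by
    intro hmem
    have h1 := split_dist hc hpl hmem
    have h2 : T.dist v u = 1 := dist_eq_one_iff_adj.mpr huv.symm
    omega
  have hr : (p.concat huv).IsPath := by
    rw [← Walk.isPath_reverse_iff, Walk.reverse_concat]
    refine hp.reverse.cons ?_
    rwa [Walk.support_reverse, List.mem_reverse]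
  have h5 : p.concat huv = q :=
    congrArg Subtype.val (hT.IsAcyclic.path_unique ⟨p.concat huv, hr⟩ ⟨q, hq⟩)
  have hlen : (p.concat huv).length = q.length := by rw [h5]
  rw [Walk.length_concat] at hlen
  omega

/-- F3: from any vertex `x`, at most one neighbor of `v` is closer than `v`. -/
lemma not_both_closer (hT : T.IsTree) {x v u w : V} (hu : T.Adj v u) (hw : T.Adj v w)
    (huw : u ≠ w) (h1 : T.dist x u < T.dist x v) (h2 : T.dist x w < T.dist x v) : False := by
  have hc := hT.isConnected
  have htu : T.dist x v ≤ T.dist x u + 1 := by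
    have := hc.dist_triangle (u := x) (v := u) (w := v)
    have h3 : T.dist u v = 1 := dist_eq_one_iff_adj.mpr hu.symm
    omega
  have htw : T.dist x v ≤ T.dist x w + 1 := by
    have := hc.dist_triangle (u := x) (v := w) (w := v)
    have h3 : T.dist w v = 1 := dist_eq_one_iff_adj.mpr hw.symm
    omega
  obtain ⟨p, hp, hpl⟩ := exists_geodesic hc x u
  obtain ⟨q, hq, hql⟩ := exists_geodesic hc x w
  have hp' : (p.concat hu.symm).IsPath := concat_isPath hc hp hpl hu.symm (by omega)
  have hq' : (q.concat hw.symm).IsPath := concat_isPath hc hq hql hw.symm (by omega)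
  have heq : p.concat hu.symm = q.concat hw.symm :=
    congrArg Subtype.val (hT.IsAcyclic.path_unique ⟨p.concat hu.symm, hp'⟩ ⟨q.concat hw.symm, hq'⟩)
  have hmem : u ∈ (q.concat hw.symm).support := by
    rw [← heq, Walk.support_concat, List.mem_append]
    exact Or.inl p.end_mem_support
  rw [Walk.support_concat, List.mem_append] at hmem
  rcases hmem with hmem | hmem
  · have h3 := split_dist hc hql hmem
    have h4 : u = w := by
      have : T.dist u w = 0 := by omega
      exact ((hc.preconnected u w).dist_eq_zero_iff).mp this
    exact huw h4
  · simp only [List.mem_singleton] at hmem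
    exact hu.ne' hmem

variable (T) in
/-- The component of `v` in `T` minus the edge `uv`: vertices strictly closer to `v`. -/
noncomputable def side (u v : V) : Finset V := univ.filter (fun x => T.dist x v < T.dist x u)

lemma mem_side {u v x : V} : x ∈ side T u v ↔ T.dist x v < T.dist x u := by
  simp [side]

lemma compl_side (hT : T.IsTree) {u v : V} (huv : T.Adj u v) :
    (side T u v)ᶜ = side T v u := by
  ext x
  have := dist_ne_of_adj hT x huv
  simp only [Finset.mem_compl, mem_side]
  omega

lemma snd_mem_side {u v : V} (hc : T.Connected) (huv : T.Adj u v) : v ∈ side T u v := by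
  rw [mem_side, SimpleGraph.dist_self]
  exact dist_pos_of_ne hc huv.ne'

lemma not_fst_mem_side {u v : V} (hc : T.Connected) (huv : T.Adj u v) :
    u ∉ side T u v := by
  rw [mem_side, SimpleGraph.dist_self]
  omega

/-- geodesics from `v` stay inside `side T u v`. -/
lemma geodesic_stays (hT : T.IsTree) {u v x : V} (huv : T.Adj u v)
    (hx : x ∈ side T u v) {p : T.Walk v x} (hpl : p.length = T.dist v x)
    {z : V} (hz : z ∈ p.support) : z ∈ side T u v := by
  have hc := hT.isConnected
  rw [mem_side] at hx ⊢
  have h1 := split_dist hc hpl hz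
  have h2 : T.dist x u ≤ T.dist x v + 1 := by
    have := hc.dist_triangle (u := x) (v := v) (w := u)
    have h3 : T.dist v u = 1 := dist_eq_one_iff_adj.mpr huv.symm
    omega
  have h3 : T.dist x u ≤ T.dist x z + T.dist z u := hc.dist_triangle
  have c1 : T.dist v z = T.dist z v := SimpleGraph.dist_comm ..
  have c2 : T.dist z x = T.dist x z := SimpleGraph.dist_comm ..
  have c3 : T.dist v x = T.dist x v := SimpleGraph.dist_comm ..
  omega

lemma side_connIn (hT : T.IsTree) {u v : V} (huv : T.Adj u v) :
    ConnIn T ((side T u v : Finset V) : Set V) := by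
  have hc := hT.isConnected
  intro x hx y hy
  simp only [Finset.coe_mem, Finset.mem_coe] at hx hy
  obtain ⟨p, hp, hpl⟩ := exists_geodesic hc v x
  obtain ⟨q, hq, hql⟩ := exists_geodesic hc v y
  refine ⟨p.reverse.append q, fun z hz => ?_⟩
  rw [Walk.mem_support_append_iff] at hz
  rcases hz with hz | hz
  · rw [Walk.support_reverse, List.mem_reverse] at hz
    exact geodesic_stays hT huv hx hpl hz
  · exact geodesic_stays hT huv hy hql hz

/-- Every vertex other than `v` lies on some branch at `v`. -/
lemma cover (hT : T.IsTree) {v x : V} (hx : x ≠ v) :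
    ∃ w, T.Adj v w ∧ x ∈ side T v w := by
  have hc := hT.isConnected
  obtain ⟨p, hp, hpl⟩ := exists_geodesic hc v x
  cases p with
  | nil => exact absurd rfl hx.symm
  | cons h q =>
    rename_i w
    refine ⟨w, h, ?_⟩
    rw [mem_side]
    have h1 : T.dist x w ≤ q.length := by
      have := dist_le q.reverse
      rwa [Walk.length_reverse] at this
    have h2 : T.dist x v = T.dist v x := SimpleGraph.dist_comm ..
    rw [Walk.length_cons] at hpl
    omega

/-- A branch at `v` through `w ≠ u` is contained in the `v`-side of edge `uv`. -/
lemma side_subset (hT : T.IsTree) {u v w : V} (hu : T.Adj v u) (hw : T.Adj v w)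
    (huw : u ≠ w) : side T v w ⊆ side T u v := by
  intro x hx
  rw [mem_side] at hx ⊢
  have hne := dist_ne_of_adj hT x (hu.symm)
  have htri : T.dist x v ≤ T.dist x u + 1 := by
    have := hT.isConnected.dist_triangle (u := x) (v := u) (w := v)
    have h3 : T.dist u v = 1 := dist_eq_one_iff_adj.mpr hu.symm
    omega
  by_contra hcon
  have h1 : T.dist x u < T.dist x v := by omega
  exact not_both_closer hT hu hw huw h1 hx

end TreeCutAux

/-- **Lemma 7.7.** If `T` is a finite tree with at least two vertices and maximum
degree at most `Δ`, then there is a set `A` of vertices such that `A` and `Aᶜ`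
both induce connected subgraphs, `|A| ≥ |V(T)|/(4Δ)` and `|Aᶜ| ≥ |V(T)|/2`. -/
theorem tree_balanced_cut (V : Type) [Fintype V] [DecidableEq V]
    (T : SimpleGraph V) (hT : T.IsTree) (h2 : 2 ≤ Fintype.card V)
    (Δ : ℕ) (hΔ : DegLE T Δ) :
    ∃ A : Finset V, ConnIn T (A : Set V) ∧ ConnIn T ((Aᶜ : Finset V) : Set V) ∧
      (Fintype.card V : ℝ) / (4 * Δ) ≤ (A.card : ℝ) ∧
      (Fintype.card V : ℝ) / 2 ≤ ((Aᶜ : Finset V).card : ℝ) := by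
  classical
  have hc := hT.isConnected
  set n := Fintype.card V with hn
  -- cards of complementary sides
  have hcards : ∀ u v : V, T.Adj u v →
      (TreeCutAux.side T u v).card + (TreeCutAux.side T v u).card = n := by
    intro u v huv
    rw [← TreeCutAux.compl_side hT huv, Finset.card_compl]
    have := Finset.card_le_univ (TreeCutAux.side T u v)
    omega
  -- degree bound
  have hdeg : ∀ v : V, (T.neighborFinset v).card ≤ Δ := by
    intro v
    have h1 := hΔ v
    have h2 : (T.neighborSet v).ncard = (T.neighborFinset v).card := by
      rw [← Set.ncard_coe_finset]
      congr 1
      ext x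
      simp
    exact h2 ▸ h1
  -- an edge exists
  obtain ⟨a, b, hab⟩ : ∃ a b : V, T.Adj a b := by
    obtain ⟨a, b, hne⟩ := Fintype.exists_pair_of_one_lt_card h2
    obtain ⟨p, hp, hpl⟩ := TreeCutAux.exists_geodesic hc a b
    cases p with
    | nil => exact absurd rfl hne
    | cons h q => exact ⟨_, _, h⟩
  -- candidate set of directed edges
  set E : Finset (V × V) :=
    univ.filter (fun p : V × V => T.Adj p.1 p.2 ∧ n ≤ 2 * (TreeCutAux.side T p.1 p.2).card)
    with hE
  have hEne : E.Nonempty := by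
    have hab' := hcards a b hab
    rcases le_or_gt n (2 * (TreeCutAux.side T a b).card) with h | h
    · exact ⟨(a, b), by simp [hE, hab, h]⟩
    · exact ⟨(b, a), by simp [hE, hab.symm]; omega⟩
  obtain ⟨uv, huvE, hmin⟩ :=
    E.exists_min_image (fun p => (TreeCutAux.side T p.1 p.2).card) hEne
  obtain ⟨u, v⟩ := uv
  rw [hE, Finset.mem_filter] at huvE
  obtain ⟨-, huv, hm⟩ := huvE
  set m := (TreeCutAux.side T u v).card with hmdef
  -- every branch at v has size at most n/2
  have hbranch : ∀ w : V, T.Adj v w → 2 * (TreeCutAux.side T v w).card ≤ n := by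
    intro w hw
    by_contra hcon
    push_neg at hcon
    have hwE : (v, w) ∈ E := by
      simp only [hE, Finset.mem_filter, Finset.mem_univ, true_and]
      exact ⟨hw, by omega⟩
    have hge : m ≤ (TreeCutAux.side T v w).card := by
      have := hmin _ hwE
      simpa using this
    rcases eq_or_ne w u with h | hwu
    · -- side v u is the complement of side u v
      rw [h] at hcon
      have := hcards u v huv
      omega
    · -- side v w is strictly inside side u v
      have hsub : TreeCutAux.side T v w ⊆ TreeCutAux.side T u v :=
        TreeCutAux.side_subset hT huv.symm hw (fun he => hwu he.symm)
      have hvmem : v ∈ TreeCutAux.side T u v := TreeCutAux.snd_mem_side hc huv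
      have hvnot : v ∉ TreeCutAux.side T v w := TreeCutAux.not_fst_mem_side hc hw
      have hlt : (TreeCutAux.side T v w).card < m :=
        Finset.card_lt_card ⟨hsub, fun hcontra => hvnot (hcontra hvmem)⟩
      omega
  -- branches cover everything but v
  have hcover : univ.erase v ⊆
      (T.neighborFinset v).biUnion (fun w => TreeCutAux.side T v w) := by
    intro x hx
    rw [Finset.mem_erase] at hx
    obtain ⟨w, hw, hxw⟩ := TreeCutAux.cover hT hx.1
    exact Finset.mem_biUnion.mpr ⟨w, T.mem_neighborFinset v w |>.mpr hw, hxw⟩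
  -- pick the largest branch
  have hNne : (T.neighborFinset v).Nonempty := ⟨u, (T.mem_neighborFinset v u).mpr huv.symm⟩
  obtain ⟨w, hwN, hwmax⟩ :=
    (T.neighborFinset v).exists_max_image (fun w => (TreeCutAux.side T v w).card) hNne
  have hvw : T.Adj v w := (T.mem_neighborFinset v w).mp hwN
  set A := TreeCutAux.side T v w with hA
  have hcount : n - 1 ≤ Δ * A.card := by
    have h1 : (univ.erase v).card = n - 1 := by
      rw [Finset.card_erase_of_mem (Finset.mem_univ v), Finset.card_univ]
    have h2 := Finset.card_le_card hcover
    have h3 := Finset.card_biUnion_le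
      (s := T.neighborFinset v) (t := fun w => TreeCutAux.side T v w)
    have h4 : ∑ z ∈ T.neighborFinset v, (TreeCutAux.side T v z).card ≤
        (T.neighborFinset v).card * A.card := by
      rw [← smul_eq_mul]
      exact Finset.sum_le_card_nsmul _ _ _ (fun z hz => hwmax z hz)
    have h5 := hdeg v
    have h6 : (T.neighborFinset v).card * A.card ≤ Δ * A.card :=
      Nat.mul_le_mul_right _ h5
    omega
  have hΔpos : 0 < Δ := lt_of_lt_of_le hNne.card_pos (hdeg v)
  have hhalf : 2 * A.card ≤ n := hbranch w hvw
  have hAcompl : (Aᶜ : Finset V).card = n - A.card := by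
    rw [Finset.card_compl]
  refine ⟨A, TreeCutAux.side_connIn hT hvw, ?_, ?_, ?_⟩
  · rw [hA, TreeCutAux.compl_side hT hvw]
    exact TreeCutAux.side_connIn hT hvw.symm
  · rw [div_le_iff₀ (by positivity)]
    have hnat : n ≤ A.card * (4 * Δ) := by
      have : n ≤ 4 * (n - 1) := by omega
      calc n ≤ 4 * (n - 1) := this
        _ ≤ 4 * (Δ * A.card) := by omega
        _ = A.card * (4 * Δ) := by ring
    exact_mod_cast hnat
  · rw [div_le_iff₀ (by norm_num)]
    have hnat : n ≤ (Aᶜ : Finset V).card * 2 := by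
      rw [hAcompl]
      have := Finset.card_le_univ A
      omega
    exact_mod_cast hnat
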